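/- Let P₀, K₁, K₂ be nonempty finite sets, a ∈ (0,1]. For ℓ = 1,2 let Fℓ : P₀ × Kℓ → [0,1] with Σ Fℓ ≥ a·|P₀|·|Kℓ|, and suppose that for every h ∈ P₀: (Σ_{e∈K₁} F₁(h,e))/|K₁| = (Σ_{e∈K₂} F₂(h,e))/|K₂|. Define F : P₀ × K₁ × K₂ → [0,1] by F(h,e₁,e₂) = F₁(h,e₁)·F₂(h,e₂). Then Σ F ≥ (a³/8)·|P₀|·|K₁|·|K₂|. -/

import Mathlib

open Finset

theorem balanced_product_norm {P₀ K₁ K₂ : Type*}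
    [Fintype P₀] [Fintype K₁] [Fintype K₂]
    [Nonempty P₀] [Nonempty K₁] [Nonempty K₂]
    (a : ℝ) (ha : a ∈ Set.Ioc (0:ℝ) 1)
    (F₁ : P₀ × K₁ → ℝ) (F₂ : P₀ × K₂ → ℝ)
    (hF₁ : ∀ p, F₁ p ∈ Set.Icc (0:ℝ) 1) (hF₂ : ∀ p, F₂ p ∈ Set.Icc (0:ℝ) 1)
    (hs₁ : a * ((Fintype.card P₀ : ℝ) * (Fintype.card K₁ : ℝ)) ≤ ∑ p, F₁ p)
    (hs₂ : a * ((Fintype.card P₀ : ℝ) * (Fintype.card K₂ : ℝ)) ≤ ∑ p, F₂ p)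
    (hbal : ∀ h : P₀,
      (∑ e, F₁ (h, e)) / (Fintype.card K₁ : ℝ) = (∑ e, F₂ (h, e)) / (Fintype.card K₂ : ℝ)) :
    (a ^ 3 / 8) * ((Fintype.card P₀ : ℝ) * (Fintype.card K₁ : ℝ) * (Fintype.card K₂ : ℝ))
      ≤ ∑ h, ∑ e₁, ∑ e₂, F₁ (h, e₁) * F₂ (h, e₂) := by
  obtain ⟨ha0, ha1⟩ := ha
  have hnpos : (0:ℝ) < (Fintype.card P₀ : ℝ) := by
    exact_mod_cast Fintype.card_pos
  have hk₁pos : (0:ℝ) < (Fintype.card K₁ : ℝ) := by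
    exact_mod_cast Fintype.card_pos
  have hk₂pos : (0:ℝ) < (Fintype.card K₂ : ℝ) := by
    exact_mod_cast Fintype.card_pos
  set m : P₀ → ℝ := fun h => (∑ e, F₁ (h, e)) / (Fintype.card K₁ : ℝ) with hm
  -- rewrite the RHS
  have hRHS : ∑ h, ∑ e₁, ∑ e₂, F₁ (h, e₁) * F₂ (h, e₂)
      = (Fintype.card K₁ : ℝ) * (Fintype.card K₂ : ℝ) * ∑ h, (m h) ^ 2 := by
    rw [Finset.mul_sum]
    refine Finset.sum_congr rfl fun h _ => ?_
    have h1 : ∑ e, F₁ (h, e) = m h * (Fintype.card K₁ : ℝ) := by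
      rw [hm]; exact (div_mul_cancel₀ _ hk₁pos.ne').symm
    have h2 : ∑ e, F₂ (h, e) = m h * (Fintype.card K₂ : ℝ) := by
      have cross := (div_eq_div_iff hk₁pos.ne' hk₂pos.ne').mp (hbal h)
      rw [hm]
      field_simp
      linarith [cross]
    calc ∑ e₁, ∑ e₂, F₁ (h, e₁) * F₂ (h, e₂)
        = (∑ e₁, F₁ (h, e₁)) * (∑ e₂, F₂ (h, e₂)) := by
          rw [Finset.sum_mul_sum]
      _ = (Fintype.card K₁ : ℝ) * (Fintype.card K₂ : ℝ) * (m h) ^ 2 := by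
          rw [h1, h2]; ring
  -- sum of m
  have hsum_m : a * (Fintype.card P₀ : ℝ) ≤ ∑ h, m h := by
    have hsplit : ∑ p, F₁ p = ∑ h, ∑ e, F₁ (h, e) := by
      rw [← Fintype.sum_prod_type]
    have : ∑ h, m h = (∑ p, F₁ p) / (Fintype.card K₁ : ℝ) := by
      rw [hsplit, Finset.sum_div]
    rw [this, le_div_iff₀ hk₁pos]
    calc a * (Fintype.card P₀ : ℝ) * (Fintype.card K₁ : ℝ)
        = a * ((Fintype.card P₀ : ℝ) * (Fintype.card K₁ : ℝ)) := by ring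
      _ ≤ ∑ p, F₁ p := hs₁
  -- Cauchy–Schwarz
  have hCS : (∑ h, m h) ^ 2 ≤ (Fintype.card P₀ : ℝ) * ∑ h, (m h) ^ 2 := by
    have := sq_sum_le_card_mul_sum_sq (s := (Finset.univ : Finset P₀)) (f := m)
    simpa using this
  have hsq : a ^ 2 * (Fintype.card P₀ : ℝ) ≤ ∑ h, (m h) ^ 2 := by
    have h1 : (a * (Fintype.card P₀ : ℝ)) ^ 2 ≤ (∑ h, m h) ^ 2 := by
      have h0 : 0 ≤ a * (Fintype.card P₀ : ℝ) := by positivity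
      exact pow_le_pow_left₀ h0 hsum_m 2
    nlinarith
  have ha2 : a ^ 3 / 8 ≤ a ^ 2 := by nlinarith
  rw [hRHS]
  calc (a ^ 3 / 8) * ((Fintype.card P₀ : ℝ) * (Fintype.card K₁ : ℝ) * (Fintype.card K₂ : ℝ))
      ≤ (a ^ 2) * ((Fintype.card P₀ : ℝ) * (Fintype.card K₁ : ℝ) * (Fintype.card K₂ : ℝ)) := by
        apply mul_le_mul_of_nonneg_right ha2; positivity
    _ = (Fintype.card K₁ : ℝ) * (Fintype.card K₂ : ℝ) * (a ^ 2 * (Fintype.card P₀ : ℝ)) := by ring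
    _ ≤ (Fintype.card K₁ : ℝ) * (Fintype.card K₂ : ℝ) * ∑ h, (m h) ^ 2 := by
        apply mul_le_mul_of_nonneg_left hsq; positivity
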